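/- Let p be a probability mass function on the nonnegative integers that follows GHD(a, b, θ) with positive parameters a = (a_1, …, a_P), b = (b_1, …, b_Q) and θ > 0. Then for every positive integer r, the r-th factorial moment of p satisfies ∑_{k≥0} (k)_r · p(k) = θ^r · (∏_{i=1}^P ⟨a_i⟩^r) / (∏_{l=1}^Q ⟨b_l⟩^r), with the series on the left converging. -/

import Mathlib

/-- The rising factorial `⟨a⟩^j = a (a+1) ⋯ (a+j-1)`. -/
noncomputable def risingFact (a : ℝ) (j : ℕ) : ℝ := ∏ i ∈ Finset.range j, (a + i)

/-- The `j`-th term of the generalized hypergeometric series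
`(∏ᵢ ⟨aᵢ⟩^j / ∏ₗ ⟨bₗ⟩^j) · (θ(s-1))^j / j!`. -/
noncomputable def ghdSeries {P Q : ℕ} (a : Fin P → ℝ) (b : Fin Q → ℝ) (θ s : ℝ) (j : ℕ) : ℝ :=
  ((∏ i, risingFact (a i) j) / (∏ l, risingFact (b l) j)) * (θ * (s - 1)) ^ j / (j.factorial : ℝ)

/-- A probability mass function `p` on `ℕ` follows the generalized hypergeometric
distribution `GHD(a, b, θ)` if there is some `ρ > 1` such that for every `s` with `|s| < ρ`,
both the probability generating series and the generalized hypergeometric series converge and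
`∑ₖ p(k) sᵏ = ∑ⱼ (∏ᵢ ⟨aᵢ⟩^j / ∏ₗ ⟨bₗ⟩^j) (θ(s-1))^j / j!`. -/
def IsGHD {P Q : ℕ} (a : Fin P → ℝ) (b : Fin Q → ℝ) (θ : ℝ) (p : ℕ → ℝ) : Prop :=
  (∀ k, 0 ≤ p k) ∧ Summable p ∧ (∑' k, p k) = 1 ∧
    ∃ ρ : ℝ, 1 < ρ ∧ ∀ s : ℝ, |s| < ρ →
      Summable (fun k => p k * s ^ k) ∧
      Summable (fun j => ghdSeries a b θ s j) ∧
      (∑' k, p k * s ^ k) = ∑' j, ghdSeries a b θ s j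

open FormalMultilinearSeries in
lemma coeff_eq_zero_of_tsum_eq_zero {d : ℕ → ℝ} {ε : ℝ} (hε : 0 < ε)
    (hsum : ∀ t : ℝ, |t| < ε → Summable (fun n => d n * t ^ n))
    (hzero : ∀ t : ℝ, |t| < ε → (∑' n, d n * t ^ n) = 0) : ∀ n, d n = 0 := by
  have h1 : HasFPowerSeriesOnBall (fun _ : ℝ => (0:ℝ)) (ofScalars ℝ d) 0 (ENNReal.ofReal ε) := by
    refine ⟨?_, by simp [hε], fun {y} hy => ?_⟩
    · refine ENNReal.le_of_forall_nnreal_lt (fun r hr => ?_)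
      apply FormalMultilinearSeries.le_radius_of_summable_norm
      have hrε : (r : ℝ) < ε := by
        rw [← ENNReal.ofReal_coe_nnreal] at hr
        exact (ENNReal.ofReal_lt_ofReal_iff hε).mp hr
      have hs : Summable fun n => d n * (r:ℝ) ^ n :=
        hsum r (by rwa [abs_of_nonneg r.coe_nonneg])
      refine hs.abs.congr fun n => ?_
      rw [ofScalars_norm, abs_mul, Real.norm_eq_abs, abs_pow, abs_of_nonneg r.coe_nonneg]
    · rw [mem_emetric_ball_zero_iff] at hy
      have hyε : |y| < ε := by
        rw [← Real.norm_eq_abs, ← ENNReal.ofReal_lt_ofReal_iff hε, ofReal_norm]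
        exact hy
      have hs := hsum y hyε
      have := hs.hasSum
      rw [hzero y hyε] at this
      refine this.congr_fun fun n => ?_
      rw [ofScalars_apply_eq, smul_eq_mul]
  have h2 : HasFPowerSeriesOnBall (fun _ : ℝ => (0:ℝ)) (0 : FormalMultilinearSeries ℝ ℝ ℝ) 0
      (ENNReal.ofReal ε) := by
    refine ⟨?_, by simp [hε], fun {y} hy => ?_⟩
    · refine ENNReal.le_of_forall_nnreal_lt (fun r hr => ?_)
      apply FormalMultilinearSeries.le_radius_of_summable_norm
      simpa using summable_zero
    · simpa using hasSum_zero
  have heq := h1.hasFPowerSeriesAt.eq_formalMultilinearSeries h2.hasFPowerSeriesAt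
  intro n
  have := congrFun heq n
  rwa [FormalMultilinearSeries.zero_apply, ofScalars_eq_zero] at this
lemma binom_hasSum (k : ℕ) (x : ℝ) :
    HasSum (fun m => (k.choose m : ℝ) * x ^ m) ((1 + x) ^ k) := by
  have h0 : ∀ m ∉ Finset.range (k+1), (k.choose m : ℝ) * x ^ m = 0 := by
    intro m hm
    rw [Finset.mem_range, not_lt] at hm
    rw [Nat.choose_eq_zero_of_lt hm]
    simp
  have h : HasSum (fun m => (k.choose m : ℝ) * x ^ m) _ := hasSum_sum_of_ne_finset_zero h0
  convert h using 1
  rw [add_comm, add_pow]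
  simp [mul_comm]

lemma key_expand {p : ℕ → ℝ} (hpos : ∀ k, 0 ≤ p k) {ρ : ℝ} (hρ : 1 < ρ)
    (hsum : ∀ s : ℝ, |s| < ρ → Summable (fun k => p k * s ^ k)) :
    (∀ m, Summable (fun k => p k * (k.choose m : ℝ))) ∧
    ∀ t : ℝ, |t| < ρ - 1 →
      Summable (fun m => (∑' k, p k * (k.choose m : ℝ)) * t ^ m) ∧
      (∑' k, p k * (1+t) ^ k) = ∑' m, (∑' k, p k * (k.choose m : ℝ)) * t ^ m := by
  -- double summability for each |t| < ρ - 1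
  have main : ∀ t : ℝ, |t| < ρ - 1 →
      Summable (fun km : ℕ × ℕ => p km.1 * (km.1.choose km.2 : ℝ) * t ^ km.2) := by
    intro t ht
    rw [← summable_abs_iff]
    have habs : (fun km : ℕ × ℕ => |p km.1 * (km.1.choose km.2 : ℝ) * t ^ km.2|)
        = fun km : ℕ × ℕ => p km.1 * (km.1.choose km.2 : ℝ) * |t| ^ km.2 := by
      funext km
      rw [abs_mul, abs_mul, abs_of_nonneg (hpos _), Nat.abs_cast, abs_pow]
    rw [habs]
    refine (summable_prod_of_nonneg ?_).2 ⟨?_, ?_⟩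
    · intro km
      have := hpos km.1
      positivity
    · intro k
      exact ((binom_hasSum k |t|).mul_left (p k)).summable.congr (fun m => by ring)
    · have h1 : ∀ k : ℕ, (∑' m, p k * ((k.choose m : ℝ) * |t| ^ m)) = p k * (1 + |t|) ^ k := by
        intro k
        exact ((binom_hasSum k |t|).mul_left (p k)).tsum_eq
      have hs : Summable fun k => p k * (1 + |t|) ^ k := by
        have habs2 : abs (1 + |t|) < ρ := by
          rw [abs_of_nonneg (by positivity)]; linarith [abs_nonneg t]
        exact hsum _ habs2
      refine hs.congr (fun k => ?_)
      rw [← h1 k]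
      exact tsum_congr fun m => by ring
  have hmarg : ∀ m, Summable (fun k => p k * (k.choose m : ℝ)) := by
    intro m
    have ht0 : |(ρ-1)/2| < ρ - 1 := by
      rw [abs_of_nonneg (by linarith)]; linarith
    have h := (main _ ht0).prod_symm.prod_factor m
    have hρ1 : (0:ℝ) < (ρ-1)/2 := by linarith
    have hne : ((ρ-1)/2 : ℝ) ^ m ≠ 0 := pow_ne_zero m (ne_of_gt hρ1)
    have := h.mul_right (((ρ-1)/2 : ℝ) ^ m)⁻¹
    refine this.congr fun k => ?_
    simp only [Function.comp, Prod.swap]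
    rw [mul_assoc (p k * _), mul_inv_cancel₀ hne, mul_one]
  refine ⟨hmarg, fun t ht => ?_⟩
  have hF := main t ht
  have hswap : ∀ m, (∑' k, p k * (k.choose m : ℝ) * t ^ m)
      = (∑' k, p k * (k.choose m : ℝ)) * t ^ m := by
    intro m
    rw [tsum_mul_right]
  constructor
  · have := hF.prod_symm.prod
    refine this.congr fun m => ?_
    simp only [Function.comp, Prod.swap]
    exact hswap m
  · have h2 := Summable.tsum_comm (f := fun k m => p k * (k.choose m : ℝ) * t ^ m) hF
    have h3 : ∀ k, (∑' m, p k * (k.choose m : ℝ) * t ^ m) = p k * (1+t) ^ k := by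
      intro k
      rw [← ((binom_hasSum k t).mul_left (p k)).tsum_eq]
      exact tsum_congr fun m => by ring
    calc (∑' k, p k * (1+t) ^ k) = ∑' k, ∑' m, p k * (k.choose m : ℝ) * t ^ m := by
          exact tsum_congr fun k => (h3 k).symm
    _ = ∑' m, ∑' k, p k * (k.choose m : ℝ) * t ^ m := h2.symm
    _ = ∑' m, (∑' k, p k * (k.choose m : ℝ)) * t ^ m := tsum_congr hswap

lemma coeff_unique {g c : ℕ → ℝ} {ε : ℝ} (hε : 0 < ε)
    (hg : ∀ t : ℝ, |t| < ε → Summable (fun n => g n * t ^ n))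
    (hc : ∀ t : ℝ, |t| < ε → Summable (fun n => c n * t ^ n))
    (heq : ∀ t : ℝ, |t| < ε → (∑' n, g n * t ^ n) = ∑' n, c n * t ^ n) :
    ∀ n, g n = c n := by
  have h := coeff_eq_zero_of_tsum_eq_zero (d := fun n => g n - c n) hε ?_ ?_
  · intro n; have := h n; linarith
  · intro t ht
    exact ((hg t ht).sub (hc t ht)).congr fun n => by ring
  · intro t ht
    have : (∑' n, (g n - c n) * t ^ n) = (∑' n, g n * t ^ n) - ∑' n, c n * t ^ n := by
      rw [← Summable.tsum_sub (hg t ht) (hc t ht)]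
      exact tsum_congr fun n => by ring
    rw [this, heq t ht, sub_self]

theorem ghd_factorial_moment {P Q : ℕ} (a : Fin P → ℝ) (b : Fin Q → ℝ) (θ : ℝ)
    (ha : ∀ i, 0 < a i) (hb : ∀ l, 0 < b l) (hθ : 0 < θ)
    (p : ℕ → ℝ) (hp : IsGHD a b θ p) (r : ℕ) (hr : 0 < r) :
    Summable (fun k => (k.descFactorial r : ℝ) * p k) ∧
      (∑' k, (k.descFactorial r : ℝ) * p k)
        = θ ^ r * (∏ i, risingFact (a i) r) / (∏ l, risingFact (b l) r) := by
  obtain ⟨hpos, hsump, htsum1, ρ, hρ, hGF⟩ := hp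
  set c : ℕ → ℝ := fun j =>
    ((∏ i, risingFact (a i) j) / (∏ l, risingFact (b l) j)) * θ ^ j / (j.factorial : ℝ) with hc
  have hghd : ∀ t : ℝ, ∀ j : ℕ, ghdSeries a b θ (1 + t) j = c j * t ^ j := by
    intro t j
    simp only [ghdSeries, hc, add_sub_cancel_left, mul_pow]
    ring
  obtain ⟨hmarg, hkey⟩ := key_expand hpos hρ (fun s hs => (hGF s hs).1)
  set g : ℕ → ℝ := fun m => ∑' k, p k * (k.choose m : ℝ) with hg
  have hε : (0:ℝ) < ρ - 1 := by linarith
  have habs1t : ∀ t : ℝ, |t| < ρ - 1 → |1 + t| < ρ := by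
    intro t ht
    calc |1 + t| ≤ |(1:ℝ)| + |t| := abs_add_le 1 t
    _ < ρ := by rw [abs_one]; linarith
  have heqs : ∀ t : ℝ, |t| < ρ - 1 → (∑' m, g m * t ^ m) = ∑' j, c j * t ^ j := by
    intro t ht
    obtain ⟨_, hright⟩ := hkey t ht
    obtain ⟨_, _, hgf⟩ := hGF (1 + t) (habs1t t ht)
    rw [← hright, hgf]
    exact tsum_congr (hghd t)
  have hsumc : ∀ t : ℝ, |t| < ρ - 1 → Summable (fun j => c j * t ^ j) := by
    intro t ht
    exact ((hGF (1 + t) (habs1t t ht)).2.1).congr (hghd t)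
  have hcr : g r = c r :=
    coeff_unique hε (fun t ht => (hkey t ht).1) hsumc heqs r
  have hdesc : ∀ k : ℕ, ((k.descFactorial r : ℝ)) * p k
      = (r.factorial : ℝ) * (p k * (k.choose r : ℝ)) := by
    intro k
    rw [Nat.descFactorial_eq_factorial_mul_choose]
    push_cast
    ring
  constructor
  · exact ((hmarg r).mul_left (r.factorial : ℝ)).congr fun k => (hdesc k).symm
  · have h1 : (∑' k, (k.descFactorial r : ℝ) * p k)
        = (r.factorial : ℝ) * g r := by
      rw [hg]
      rw [← tsum_mul_left]
      exact tsum_congr hdesc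
    have hfac : ((r.factorial : ℝ)) ≠ 0 := Nat.cast_ne_zero.mpr r.factorial_ne_zero
    rw [h1, hcr, hc]
    rw [mul_comm, div_mul_cancel₀ _ hfac]
    ring
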